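/- The taïga congruence ≡_t, i.e. the join of the sylvester congruence and the stalactic congruence, is a pack-good congruence: it is a pack-congruence (for all words u,v, u ≡_t v ⟺ pack(u) ≡_t pack(v) and ev(u) = ev(v)) and it is compatible with restriction to alphabet intervals. -/

import Mathlib

open scoped Classical

/-- Words over the positive integers. -/
abbrev Word : Type := List ℕ+

/-- Evaluation of a word: number of occurrences of each letter. -/
def ev (w : Word) : ℕ+ → ℕ := fun a => w.count a

/-- A monoid congruence on the free monoid `(ℕ⁺)*`. -/
def IsCongruence (r : Word → Word → Prop) : Prop :=
  Equivalence r ∧ ∀ u v u' v', r u v → r u' v' → r (u ++ u') (v ++ v')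

/-- Restriction of a word to the letters belonging to a set `I`. -/
noncomputable def restrictTo (I : Set ℕ+) (w : Word) : Word :=
  w.filter fun a => decide (a ∈ I)

/-- `I` is an interval (order-convex subset) of `ℕ⁺`. -/
def IsIntervalSet (I : Set ℕ+) : Prop :=
  ∀ ⦃a b c : ℕ+⦄, a ∈ I → c ∈ I → a ≤ b → b ≤ c → b ∈ I

/-- Compatibility with restriction to alphabet intervals. -/
def CompatRestrict (r : Word → Word → Prop) : Prop :=
  ∀ I : Set ℕ+, IsIntervalSet I → ∀ u v, r u v → r (restrictTo I u) (restrictTo I v)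

/-- `r` is a `φ`-congruence. -/
def IsPhiCongruence (φ : Word → Word) (r : Word → Word → Prop) : Prop :=
  ∀ u v, r u v ↔ (r (φ u) (φ v) ∧ ev u = ev v)

/-- Standardization. -/
def std (w : Word) : Word :=
  (List.range w.length).map fun i =>
    ⟨((List.range w.length).countP fun j =>
        decide (w.getD j 1 < w.getD i 1 ∨ (w.getD j 1 = w.getD i 1 ∧ j < i))) + 1,
      Nat.succ_pos _⟩

/-- Packing. -/
def pack (w : Word) : Word :=
  w.map fun a => ⟨(w.dedup.countP fun b => decide (b < a)) + 1, Nat.succ_pos _⟩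

theorem parkBad_ex (w : Word) :
    ∃ d : ℕ, 1 ≤ d ∧ (w.countP fun a : ℕ+ => decide ((a : ℕ) ≤ d)) < d :=
  ⟨w.length + 1, Nat.succ_le_succ (Nat.zero_le _), by
    have h : (w.countP fun a : ℕ+ => decide ((a : ℕ) ≤ w.length + 1)) ≤ w.length :=
      List.countP_le_length
    omega⟩

/-- The smallest `d ≥ 1` such that fewer than `d` letters of `w` are `≤ d`. -/
noncomputable def parkBad (w : Word) : ℕ := Nat.find (parkBad_ex w)

/-- One pass of the parkization procedure, with fuel. -/
noncomputable def parkAux : ℕ → Word → Word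
  | 0, w => w
  | f + 1, w =>
    if parkBad w ≤ w.length then
      parkAux f (w.map fun a : ℕ+ => if parkBad w < (a : ℕ) then (a - 1 : ℕ+) else a)
    else w

/-- Parkization. The fuel `(sum of the letters)` always suffices,
since every pass strictly decreases the sum of the letters. -/
noncomputable def park (w : Word) : Word := parkAux (w.map fun a => (a : ℕ)).sum w

/-- Smallest monoid congruence containing `base`. -/
def CongClosure (base : Word → Word → Prop) (u v : Word) : Prop :=
  ∀ r : Word → Word → Prop, IsCongruence r → (∀ x y, base x y → r x y) → r u v

def sylvBase (x y : Word) : Prop :=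
  ∃ (a b c : ℕ+) (v : Word), a ≤ b ∧ b < c ∧
    x = a :: c :: (v ++ [b]) ∧ y = c :: a :: (v ++ [b])

/-- The sylvester congruence. -/
def sylv : Word → Word → Prop := CongClosure sylvBase

def stalBase (x y : Word) : Prop :=
  ∃ (a b : ℕ+) (v : Word), x = b :: a :: (v ++ [b]) ∧ y = a :: b :: (v ++ [b])

/-- The stalactic congruence. -/
def stal : Word → Word → Prop := CongClosure stalBase

def sylvSharpBase (x y : Word) : Prop :=
  ∃ (a b c : ℕ+) (v : Word), a < b ∧ b ≤ c ∧
    x = b :: (v ++ [a, c]) ∧ y = b :: (v ++ [c, a])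

/-- The #-sylvester congruence. -/
def sylvSharp : Word → Word → Prop := CongClosure sylvSharpBase

/-- The taïga congruence: join of the sylvester and stalactic congruences. -/
def taiga : Word → Word → Prop := CongClosure fun u v => sylv u v ∨ stal u v

/-- Planar binary trees with letter labels. -/
inductive BT : Type where
  | leaf : BT
  | node : BT → ℕ+ → BT → BT
deriving DecidableEq

/-- Binary search tree insertion of a letter. -/
def BT.insert : BT → ℕ+ → BT
  | .leaf, l => .node .leaf l .leaf
  | .node L b R, l => if l ≤ b then .node (L.insert l) b R else .node L b (R.insert l)

/-- Binary search tree of a word: insert the letters from right to left. -/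
def bst (w : Word) : BT := w.foldr (fun l t => t.insert l) .leaf

/-- Planar binary trees labelled by a letter and a multiplicity. -/
inductive BSTM : Type where
  | leaf : BSTM
  | node : BSTM → ℕ+ → ℕ+ → BSTM → BSTM   -- left, letter, multiplicity, right
deriving DecidableEq

/-- Insertion of a letter into a binary search tree with multiplicities. -/
def BSTM.insert : BSTM → ℕ+ → BSTM
  | .leaf, l => .node .leaf l 1 .leaf
  | .node L l' k R, l =>
    if l = l' then .node L l' (k + 1) R
    else if l < l' then .node (L.insert l) l' k R
    else .node L l' k (R.insert l)

/-- The `P`-symbol: insert the letters of `w` from right to left. -/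
def Pmap (w : Word) : BSTM := w.foldr (fun l t => t.insert l) .leaf

/-- Letters of a BSTM in left-to-right (infix) order. -/
def BSTM.letters : BSTM → List ℕ+
  | .leaf => []
  | .node L l _ R => L.letters ++ l :: R.letters

/-- The binary search tree property for a BSTM. -/
def BSTM.IsSearchTree : BSTM → Prop
  | .leaf => True
  | .node L l _ R =>
      (∀ x ∈ L.letters, x < l) ∧ (∀ x ∈ R.letters, l < x) ∧
        L.IsSearchTree ∧ R.IsSearchTree

/-- Total multiplicity of a letter in a BSTM. -/
def BSTM.mult : BSTM → ℕ+ → ℕ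
  | .leaf, _ => 0
  | .node L l k R, a => L.mult a + (if a = l then (k : ℕ) else 0) + R.mult a

/-- Size of a BSTM: sum of the multiplicities. -/
def BSTM.size : BSTM → ℕ
  | .leaf => 0
  | .node L _ k R => L.size + (k : ℕ) + R.size

/-- Planar binary trees with multiplicities. -/
inductive BTM : Type where
  | leaf : BTM
  | node : BTM → ℕ+ → BTM → BTM
deriving DecidableEq

/-- Size of a BTM: sum of the multiplicities. -/
def BTM.size : BTM → ℕ
  | .leaf => 0
  | .node L k R => L.size + (k : ℕ) + R.size

/-- Number of nodes of a BTM. -/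
def BTM.numNodes : BTM → ℕ
  | .leaf => 0
  | .node L _ R => L.numNodes + 1 + R.numNodes

/-- Forgetting the letters of a BSTM gives a BTM. -/
def forgetLetters : BSTM → BTM
  | .leaf => .leaf
  | .node L _ k R => .node (forgetLetters L) k (forgetLetters R)

/-- The `B`-symbol: the BTM underlying `P(w)`. -/
def Bmap (w : Word) : BTM := forgetLetters (Pmap w)

/-- A packed word: its set of letters is `{1, …, k}` for some `k`. -/
def IsPacked (w : Word) : Prop := ∀ a ∈ w, ∀ b : ℕ+, b ≤ a → b ∈ w

/-- Number of packed words inserting to the BTM `T`. -/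
noncomputable def fT (T : BTM) : ℕ :=
  Set.ncard {w : Word | IsPacked w ∧ Bmap w = T}

/-- The hook-type product over the subtrees of a BTM. -/
def hookProd : BTM → ℕ
  | .leaf => 1
  | .node L k R =>
      (BTM.node L k R).size * ((k : ℕ) - 1).factorial * hookProd L * hookProd R

/-- Label the nodes of a BTM in infix order starting from a given letter;
returns the labelled tree and the next unused letter. -/
def infixLabelAux : BTM → ℕ+ → BSTM × ℕ+
  | .leaf, n => (.leaf, n)
  | .node L k R, n =>
    let p := infixLabelAux L n
    let q := infixLabelAux R (p.2 + 1)
    (.node p.1 p.2 k q.1, q.2)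

/-- Label the nodes of a BTM by `1, …, k` in infix order. -/
def infixLabel (T : BTM) : BSTM := (infixLabelAux T 1).1

/-! ### Auxiliary lemmas for `taiga_is_packGood` -/

section TaigaAux

private lemma congClosure_isCong (base : Word → Word → Prop) :
    IsCongruence (CongClosure base) := by
  refine ⟨⟨?_, ?_, ?_⟩, ?_⟩
  · intro u r hc _; exact hc.1.refl u
  · intro u v h r hc hb; exact hc.1.symm (h r hc hb)
  · intro u v w h1 h2 r hc hb; exact hc.1.trans (h1 r hc hb) (h2 r hc hb)
  · intro u v u' v' h h' r hc hb; exact hc.2 _ _ _ _ (h r hc hb) (h' r hc hb)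

private lemma base_le_closure {base : Word → Word → Prop} {x y : Word} (h : base x y) :
    CongClosure base x y := fun _ _ hb => hb x y h

private lemma closure_le {base r : Word → Word → Prop} (hc : IsCongruence r)
    (hb : ∀ x y, base x y → r x y) {x y : Word} (h : CongClosure base x y) : r x y :=
  h r hc hb

private lemma sylv_le_taiga {x y : Word} (h : sylv x y) : taiga x y :=
  base_le_closure (Or.inl h)

private lemma stal_le_taiga {x y : Word} (h : stal x y) : taiga x y :=
  base_le_closure (Or.inr h)

private lemma ev_sylvBase {x y : Word} (h : sylvBase x y) : ev x = ev y := by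
  obtain ⟨a, b, c, v, _, _, hx, hy⟩ := h
  subst hx; subst hy
  funext d
  simp only [ev, List.count_cons, List.count_append]
  split_ifs <;> omega

private lemma ev_stalBase {x y : Word} (h : stalBase x y) : ev x = ev y := by
  obtain ⟨a, b, v, hx, hy⟩ := h
  subst hx; subst hy
  funext d
  simp only [ev, List.count_cons, List.count_append]
  split_ifs <;> omega

private lemma mem_of_ev_eq {x y : Word} (h : ev x = ev y) {a : ℕ+} (ha : a ∈ y) : a ∈ x := by
  have := congrFun h a
  simp only [ev] at this
  have hy : 0 < y.count a := List.count_pos_iff.mpr ha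
  exact List.count_pos_iff.mp (this ▸ hy)

/-- The key map lemma: any letter-to-letter map that is strictly increasing on a set `S`
is compatible with the taïga congruence on words whose letters lie in `S`. -/
private lemma taiga_map {g : ℕ+ → ℕ+} {S : Set ℕ+}
    (hg : ∀ a ∈ S, ∀ b ∈ S, a < b → g a < g b) {x y : Word} (h : taiga x y) :
    ev x = ev y ∧ ((∀ a ∈ x, a ∈ S) → taiga (x.map g) (y.map g)) := by
  set R : Word → Word → Prop := fun x y =>
    ev x = ev y ∧ ((∀ a ∈ x, a ∈ S) → taiga (x.map g) (y.map g)) with hR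
  have htc : IsCongruence taiga := congClosure_isCong _
  have hRc : IsCongruence R := by
    refine ⟨⟨?_, ?_, ?_⟩, ?_⟩
    · intro u; exact ⟨rfl, fun _ => htc.1.refl _⟩
    · rintro u v ⟨he, ht⟩
      refine ⟨he.symm, fun hm => htc.1.symm (ht fun a ha => hm a (mem_of_ev_eq he.symm ha))⟩
    · rintro u v w ⟨he1, ht1⟩ ⟨he2, ht2⟩
      refine ⟨he1.trans he2, fun hm => htc.1.trans (ht1 hm) (ht2 fun a ha => hm a (mem_of_ev_eq he1 ha))⟩
    · rintro u v u' v' ⟨he, ht⟩ ⟨he', ht'⟩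
      constructor
      · funext a
        have := congrFun he a; have := congrFun he' a
        simp only [ev, List.count_append] at *
        omega
      · intro hm
        simp only [List.map_append]
        exact htc.2 _ _ _ _ (ht fun a ha => hm a (List.mem_append_left _ ha))
          (ht' fun a ha => hm a (List.mem_append_right _ ha))
  have hRsylvB : ∀ x y, sylvBase x y → R x y := by
    rintro x y ⟨a, b, c, v, hab, hbc, hx, hy⟩
    refine ⟨ev_sylvBase ⟨a, b, c, v, hab, hbc, hx, hy⟩, ?_⟩
    subst hx; subst hy
    intro hm
    have haS : a ∈ S := hm a (by simp)
    have hbS : b ∈ S := hm b (by simp)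
    have hcS : c ∈ S := hm c (by simp)
    have hvS : ∀ d ∈ v, d ∈ S := fun d hd => hm d (by simp [hd])
    have hab' : g a ≤ g b := by
      rcases lt_or_eq_of_le hab with h' | h'
      · exact le_of_lt (hg a haS b hbS h')
      · subst h'; exact le_refl _
    have hbc' : g b < g c := hg b hbS c hcS hbc
    apply sylv_le_taiga
    apply base_le_closure
    exact ⟨g a, g b, g c, v.map g, hab', hbc', by simp, by simp⟩
  have hRstalB : ∀ x y, stalBase x y → R x y := by
    rintro x y ⟨a, b, v, hx, hy⟩
    refine ⟨ev_stalBase ⟨a, b, v, hx, hy⟩, ?_⟩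
    subst hx; subst hy
    intro hm
    apply stal_le_taiga
    apply base_le_closure
    exact ⟨g a, g b, v.map g, by simp, by simp⟩
  have hbase : ∀ x y, (sylv x y ∨ stal x y) → R x y := by
    rintro x y (h | h)
    · exact closure_le hRc hRsylvB h
    · exact closure_le hRc hRstalB h
  exact closure_le hRc hbase h

private lemma taiga_ev {x y : Word} (h : taiga x y) : ev x = ev y :=
  (taiga_map (g := id) (S := Set.univ) (fun a _ b _ hab => hab) h).1

private lemma countP_lt_countP {p q : ℕ+ → Bool} {l : List ℕ+}
    (h : ∀ x ∈ l, p x = true → q x = true) {a : ℕ+} (ha : a ∈ l)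
    (hpa : ¬ p a = true) (hqa : q a = true) : l.countP p < l.countP q := by
  induction l with
  | nil => simp at ha
  | cons x t ih =>
    simp only [List.countP_cons]
    rcases List.mem_cons.mp ha with rfl | hat
    · have hle := List.countP_mono_left (p := p) (q := q) (l := t)
        (fun z hz => h z (List.mem_cons_of_mem _ hz))
      rw [if_neg hpa, if_pos hqa]
      simpa using Nat.lt_succ_of_le hle
    · have h2 := ih (fun z hz => h z (List.mem_cons_of_mem _ hz)) hat
      by_cases hp : p x = true
      · rw [if_pos hp, if_pos (h x List.mem_cons_self hp)]
        exact Nat.add_lt_add_right h2 1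
      · rw [if_neg hp]
        by_cases hq : q x = true
        · rw [if_pos hq]
          simpa using Nat.lt_succ_of_le (le_of_lt h2)
        · rw [if_neg hq]
          simpa using h2

/-- The rank map used by `pack`. -/
private noncomputable def rnk (u : Word) : ℕ+ → ℕ+ :=
  fun a => ⟨(u.dedup.countP fun b => decide (b < a)) + 1, Nat.succ_pos _⟩

private lemma pack_eq_map (u : Word) : pack u = u.map (rnk u) := rfl

private lemma rnk_strictMonoOn (u : Word) {a b : ℕ+} (ha : a ∈ u) (h : a < b) :
    rnk u a < rnk u b := by
  rw [← PNat.coe_lt_coe]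
  simp only [rnk, PNat.mk_coe]
  have : u.dedup.countP (fun x => decide (x < a)) < u.dedup.countP (fun x => decide (x < b)) := by
    refine countP_lt_countP (fun x _ hx => ?_) (List.mem_dedup.mpr ha) (by simp) (by simp [h])
    simp only [decide_eq_true_eq] at *
    exact hx.trans h
  omega

private lemma rnk_mono (u : Word) {a b : ℕ+} (h : a ≤ b) : rnk u a ≤ rnk u b := by
  rw [← PNat.coe_le_coe]
  simp only [rnk, PNat.mk_coe]
  have := List.countP_mono_left (p := fun x : ℕ+ => decide (x < a))
    (q := fun x : ℕ+ => decide (x < b)) (l := u.dedup)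
    (fun x _ hx => by simp only [decide_eq_true_eq] at *; exact lt_of_lt_of_le hx h)
  omega

private lemma rnk_eq_of_perm {u v : Word} (h : u.Perm v) : rnk u = rnk v := by
  funext a
  simp only [rnk]
  congr 1
  exact (h.dedup.countP_eq _).symm ▸ rfl

/-- The sorted list of distinct letters of `u`. -/
private noncomputable def sortedSupp (u : Word) : List ℕ+ :=
  List.insertionSort (· ≤ ·) u.dedup

private lemma sortedSupp_sorted (u : Word) : List.Pairwise (· < ·) (sortedSupp u) := by
  have h1 : List.Pairwise (· ≤ ·) (sortedSupp u) := List.pairwise_insertionSort _ _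
  have h2 : (sortedSupp u).Nodup := (List.perm_insertionSort _ _).nodup_iff.mpr u.nodup_dedup
  exact (h1.and h2).imp fun h => lt_of_le_of_ne h.1 h.2

private lemma sortedSupp_perm (u : Word) : (sortedSupp u).Perm u.dedup :=
  List.perm_insertionSort _ _

/-- The inverse rank map: sends `j` to the `j`-th smallest letter of `u`. -/
private noncomputable def unrnk (u : Word) : ℕ+ → ℕ+ :=
  fun j => (sortedSupp u).getD ((j : ℕ) - 1) 1

private lemma getD_countP_of_sorted : ∀ (l : List ℕ+), List.Pairwise (· < ·) l →
    ∀ a ∈ l, l.getD (l.countP fun b => decide (b < a)) 1 = a := by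
  intro l
  induction l with
  | nil => intro _ a ha; simp at ha
  | cons x t ih =>
    intro hs a ha
    have hxt : ∀ b ∈ t, x < b := fun b hb => List.rel_of_pairwise_cons hs hb
    rcases List.mem_cons.mp ha with rfl | hat
    · have h0 : t.countP (fun b => decide (b < a)) = 0 := by
        apply List.countP_eq_zero.mpr
        intro b hb
        simp only [decide_eq_true_eq]
        exact not_lt.mpr (le_of_lt (hxt b hb))
      simp [List.countP_cons, h0]
    · have hxa : x < a := hxt a hat
      have : (x :: t).countP (fun b => decide (b < a)) =
          t.countP (fun b => decide (b < a)) + 1 := by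
        simp [List.countP_cons, hxa]
      rw [this, List.getD_cons_succ]
      exact ih hs.of_cons a hat

private lemma unrnk_rnk {u : Word} {a : ℕ+} (ha : a ∈ u) : unrnk u (rnk u a) = a := by
  have hmem : a ∈ sortedSupp u := (sortedSupp_perm u).mem_iff.mpr (List.mem_dedup.mpr ha)
  have hcount : u.dedup.countP (fun b => decide (b < a)) =
      (sortedSupp u).countP (fun b => decide (b < a)) :=
    ((sortedSupp_perm u).countP_eq _).symm
  simp only [unrnk, rnk, PNat.mk_ofNat, PNat.mk_coe]
  show (sortedSupp u).getD ((u.dedup.countP fun b => decide (b < a)) + 1 - 1) 1 = a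
  rw [Nat.add_sub_cancel, hcount]
  exact getD_countP_of_sorted _ (sortedSupp_sorted u) a hmem

private lemma restrict_append (I : Set ℕ+) (x y : Word) :
    restrictTo I (x ++ y) = restrictTo I x ++ restrictTo I y :=
  List.filter_append _ _

private lemma restrict_cong {base : Word → Word → Prop} (I : Set ℕ+) :
    IsCongruence (fun x y => CongClosure base (restrictTo I x) (restrictTo I y)) := by
  have hs := congClosure_isCong base
  refine ⟨⟨fun _ => hs.1.refl _, fun h => hs.1.symm h, fun h1 h2 => hs.1.trans h1 h2⟩, ?_⟩
  intro a b a' b' h1 h2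
  simp only [restrict_append]
  exact hs.2 _ _ _ _ h1 h2

private lemma compat_sylv : CompatRestrict sylv := by
  intro I hI u v h
  refine closure_le (restrict_cong I) ?_ h
  rintro x y ⟨a, b, c, v', hab, hbc, rfl, rfl⟩
  rcases Classical.em (a ∈ I) with haI | haI <;> rcases Classical.em (c ∈ I) with hcI | hcI
  · have hbI : b ∈ I := hI haI hcI hab (le_of_lt hbc)
    have hx : restrictTo I (a :: c :: (v' ++ [b])) =
        a :: c :: (restrictTo I v' ++ [b]) := by
      simp [restrictTo, List.filter_cons, List.filter_append, haI, hbI, hcI]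
    have hy : restrictTo I (c :: a :: (v' ++ [b])) =
        c :: a :: (restrictTo I v' ++ [b]) := by
      simp [restrictTo, List.filter_cons, List.filter_append, haI, hbI, hcI]
    rw [hx, hy]
    exact base_le_closure ⟨a, b, c, restrictTo I v', hab, hbc, rfl, rfl⟩
  all_goals {
    have heq : restrictTo I (a :: c :: (v' ++ [b])) =
        restrictTo I (c :: a :: (v' ++ [b])) := by
      simp [restrictTo, List.filter_cons, haI, hcI]
    rw [heq]
    exact (congClosure_isCong sylvBase).1.refl _ }

private lemma compat_stal : CompatRestrict stal := by
  intro I hI u v h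
  refine closure_le (restrict_cong I) ?_ h
  rintro x y ⟨a, b, v', rfl, rfl⟩
  rcases Classical.em (a ∈ I) with haI | haI <;> rcases Classical.em (b ∈ I) with hbI | hbI
  · have hx : restrictTo I (b :: a :: (v' ++ [b])) =
        b :: a :: (restrictTo I v' ++ [b]) := by
      simp [restrictTo, List.filter_cons, List.filter_append, haI, hbI]
    have hy : restrictTo I (a :: b :: (v' ++ [b])) =
        a :: b :: (restrictTo I v' ++ [b]) := by
      simp [restrictTo, List.filter_cons, List.filter_append, haI, hbI]
    rw [hx, hy]
    exact base_le_closure ⟨a, b, restrictTo I v', rfl, rfl⟩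
  all_goals {
    have heq : restrictTo I (b :: a :: (v' ++ [b])) =
        restrictTo I (a :: b :: (v' ++ [b])) := by
      simp [restrictTo, List.filter_cons, List.filter_append, haI, hbI]
    rw [heq]
    exact (congClosure_isCong stalBase).1.refl _ }

private lemma compat_taiga : CompatRestrict taiga := by
  intro I hI u v h
  refine closure_le (restrict_cong I) ?_ h
  rintro x y (hxy | hxy)
  · exact sylv_le_taiga (compat_sylv I hI x y hxy)
  · exact stal_le_taiga (compat_stal I hI x y hxy)

private lemma perm_of_ev_eq {u v : Word} (h : ev u = ev v) : u.Perm v :=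
  List.perm_iff_count.mpr fun a => congrFun h a

private lemma pack_eq_map_of_perm {u v : Word} (h : u.Perm v) : pack v = v.map (rnk u) := by
  rw [pack_eq_map, rnk_eq_of_perm h]

end TaigaAux

theorem taiga_is_packGood :
    IsCongruence taiga ∧ IsPhiCongruence pack taiga ∧ CompatRestrict taiga := by
  refine ⟨congClosure_isCong _, ?_, compat_taiga⟩
  intro u v
  constructor
  · intro h
    have hev := taiga_ev h
    have hperm : u.Perm v := perm_of_ev_eq hev
    refine ⟨?_, hev⟩
    have hmap := (taiga_map (g := rnk u) (S := {a | a ∈ u})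
      (fun a ha b _ hab => rnk_strictMonoOn u ha hab) h).2 (fun a ha => ha)
    rw [pack_eq_map, pack_eq_map_of_perm hperm]
    exact hmap
  · rintro ⟨hp, hev⟩
    have hperm : u.Perm v := perm_of_ev_eq hev
    have hmono : ∀ x ∈ {j : ℕ+ | j ∈ pack u}, ∀ y ∈ {j : ℕ+ | j ∈ pack u},
        x < y → unrnk u x < unrnk u y := by
      intro x hx y hy hxy
      simp only [Set.mem_setOf_eq, pack_eq_map] at hx hy
      obtain ⟨a, ha, rfl⟩ := List.mem_map.mp hx
      obtain ⟨b, hb, rfl⟩ := List.mem_map.mp hy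
      rw [unrnk_rnk ha, unrnk_rnk hb]
      by_contra hba
      exact absurd (rnk_mono u (not_lt.mp hba)) (not_le.mpr hxy)
    have hmem : ∀ a ∈ pack u, a ∈ {j : ℕ+ | j ∈ pack u} := fun a ha => ha
    have hmain := (taiga_map (g := unrnk u) (S := {j : ℕ+ | j ∈ pack u}) hmono hp).2 hmem
    have hu : (pack u).map (unrnk u) = u := by
      rw [pack_eq_map, List.map_map]
      have : List.map (unrnk u ∘ rnk u) u = List.map id u :=
        List.map_congr_left (fun a ha => unrnk_rnk ha)
      rw [this, List.map_id]
    have hv : (pack v).map (unrnk u) = v := by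
      rw [pack_eq_map_of_perm hperm, List.map_map]
      have : List.map (unrnk u ∘ rnk u) v = List.map id v :=
        List.map_congr_left (fun a ha => unrnk_rnk (hperm.mem_iff.mpr ha))
      rw [this, List.map_id]
    rwa [hu, hv] at hmain
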